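/- Let $x:[0,\infty)\to\mathbb{R}^n$ solve $\dot x_i = \mathrm{sign}\big(\sum_j a_{ij}(x_j-x_i)\big)\big|\sum_j a_{ij}(x_j-x_i)\big|^{\alpha}$ with $A$ symmetric nonnegative, zero diagonal, connected graph, and $0<\alpha<1$. Define $V_1(t)=\tfrac14\sum_{i,j}a_{ij}(x_j(t)-x_i(t))^2 = \tfrac12 x(t)^T L(A) x(t)$. Then $\frac{dV_1}{dt}(t) \le -\left(2\lambda_2(L_A)\right)^{\frac{1+\alpha}{2}} V_1(t)^{\frac{1+\alpha}{2}}$ whenever $V_1(t)>0$, and consequently $V_1(t)=0$ for all $t \ge t_1 = \frac{(2V_1(0))^{\frac{1-\alpha}{2}}}{(1-\alpha)\lambda_2(L_A)^{\frac{1+\alpha}{2}}}$; in particular all states agree in finite time. -/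

import Mathlib

open Finset Matrix

def graphLaplacian {n : ℕ} (A : Matrix (Fin n) (Fin n) ℝ) : Matrix (Fin n) (Fin n) ℝ :=
  fun i j => if i = j then ∑ k ∈ univ.erase i, A i k else -A i j

def WeightConnected {n : ℕ} (A : Matrix (Fin n) (Fin n) ℝ) : Prop :=
  ∀ i j : Fin n, Relation.ReflTransGen (fun a b => 0 < A a b) i j

lemma myRpowAddLe {a b p : ℝ} (ha : 0 ≤ a) (hb : 0 ≤ b)
    (hp : 0 ≤ p) (hp1 : p ≤ 1) : (a + b) ^ p ≤ a ^ p + b ^ p := by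
  have h := NNReal.rpow_add_le_add_rpow a.toNNReal b.toNNReal hp hp1
  rw [← Real.toNNReal_add ha hb] at h
  have h2 := NNReal.coe_le_coe.2 h
  rwa [NNReal.coe_rpow, NNReal.coe_add, NNReal.coe_rpow, NNReal.coe_rpow,
    Real.coe_toNNReal _ (by linarith), Real.coe_toNNReal _ ha, Real.coe_toNNReal _ hb] at h2

lemma mySumRpow {ι : Type*} (s : Finset ι) (f : ι → ℝ) (hf : ∀ i, 0 ≤ f i)
    {p : ℝ} (hp0 : 0 < p) (hp1 : p ≤ 1) :
    (∑ i ∈ s, f i) ^ p ≤ ∑ i ∈ s, f i ^ p := by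
  classical
  induction s using Finset.induction with
  | empty => simp [Real.zero_rpow hp0.ne']
  | insert _ _ h ih =>
      rename_i a s'
      rw [Finset.sum_insert h, Finset.sum_insert h]
      calc (f a + ∑ i ∈ s', f i) ^ p ≤ f a ^ p + (∑ i ∈ s', f i) ^ p :=
            myRpowAddLe (hf a) (Finset.sum_nonneg fun i _ => hf i) hp0.le hp1
        _ ≤ _ := by linarith

lemma mySignMul (u : ℝ) : Real.sign u * u = |u| := by
  rcases lt_trichotomy u 0 with h | h | h
  · rw [Real.sign_of_neg h, abs_of_neg h]; ring
  · simp [h]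
  · rw [Real.sign_of_pos h, abs_of_pos h]; ring

lemma lapMulVec {n : ℕ} (A : Matrix (Fin n) (Fin n) ℝ) (v : Fin n → ℝ) (i : Fin n) :
    (graphLaplacian A).mulVec v i = ∑ j, A i j * (v i - v j) := by
  have h1 : (graphLaplacian A).mulVec v i = ∑ j, graphLaplacian A i j * v j := rfl
  rw [h1, ← Finset.sum_erase_add _ _ (Finset.mem_univ i),
      ← Finset.sum_erase_add univ (fun j => A i j * (v i - v j)) (Finset.mem_univ i)]
  have e2 : graphLaplacian A i i = ∑ k ∈ univ.erase i, A i k := by simp [graphLaplacian]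
  have e1 : ∑ x ∈ univ.erase i, graphLaplacian A i x * v x
      = ∑ x ∈ univ.erase i, -(A i x * v x) :=
    Finset.sum_congr rfl fun j hj => by
      simp [graphLaplacian, (Finset.ne_of_mem_erase hj).symm]
  rw [e1, e2, sub_self, mul_zero, add_zero, Finset.sum_mul, ← Finset.sum_add_distrib]
  exact Finset.sum_congr rfl fun j _ => by ring

lemma quadFormEq {n : ℕ} (A T : Matrix (Fin n) (Fin n) ℝ) (μ : Fin n → ℝ) (v : Fin n → ℝ)
    (hdiagz : graphLaplacian A = Tᵀ * Matrix.diagonal μ * T) :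
    v ⬝ᵥ (graphLaplacian A).mulVec v = ∑ i, μ i * (T.mulVec v i)^2 := by
  rw [hdiagz, Matrix.mul_assoc, ← Matrix.mulVec_mulVec, Matrix.dotProduct_mulVec,
    Matrix.vecMul_transpose, ← Matrix.mulVec_mulVec]
  simp only [dotProduct, Matrix.mulVec_diagonal]
  exact Finset.sum_congr rfl fun i _ => by ring

lemma quadFormSqEq {n : ℕ} (A T : Matrix (Fin n) (Fin n) ℝ) (μ : Fin n → ℝ) (v : Fin n → ℝ)
    (hT : Tᵀ * T = 1) (hdiagz : graphLaplacian A = Tᵀ * Matrix.diagonal μ * T) :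
    ∑ i, ((graphLaplacian A).mulVec v i)^2 = ∑ i, (μ i)^2 * (T.mulVec v i)^2 := by
  have hTT : T * Tᵀ = 1 := mul_eq_one_comm.mp hT
  have h1 : ∑ i, ((graphLaplacian A).mulVec v i)^2
      = (graphLaplacian A).mulVec v ⬝ᵥ (graphLaplacian A).mulVec v := by
    simp [dotProduct, sq]
  rw [h1]
  rw [hdiagz, Matrix.mul_assoc, ← Matrix.mulVec_mulVec, ← Matrix.mulVec_mulVec]
  rw [Matrix.dotProduct_mulVec, Matrix.vecMul_transpose, Matrix.mulVec_mulVec,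
    Matrix.mulVec_mulVec, hTT, Matrix.one_mul]
  simp only [dotProduct, Matrix.mulVec_diagonal]
  exact Finset.sum_congr rfl fun i _ => by ring

set_option maxHeartbeats 1000000 in
theorem finite_time_agreement_protocol_one {n : ℕ} (hn : 2 ≤ n)
    (A : Matrix (Fin n) (Fin n) ℝ)
    (hsymm : A.IsSymm) (hnonneg : ∀ i j, 0 ≤ A i j) (hdiag : ∀ i, A i i = 0)
    (hconn : WeightConnected A)
    (α : ℝ) (hα0 : 0 < α) (hα1 : α < 1)
    -- `μ` lists the eigenvalues of the Laplacian of `A` in increasing order, so that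
    -- `μ ⟨1, _⟩` is the second smallest eigenvalue `λ₂(L_A)`:
    (μ : Fin n → ℝ) (T : Matrix (Fin n) (Fin n) ℝ)
    (hT : Tᵀ * T = 1)
    (hdiagz : graphLaplacian A = Tᵀ * Matrix.diagonal μ * T)
    (hmono : Monotone μ)
    (hμ0 : μ ⟨0, by omega⟩ = 0)
    (hmu2 : 0 < μ ⟨1, by omega⟩)
    (x : ℝ → Fin n → ℝ)
    (hode : ∀ (t : ℝ) (i : Fin n), HasDerivAt (fun s => x s i)
      (Real.sign (∑ j, A i j * (x t j - x t i)) *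
        |∑ j, A i j * (x t j - x t i)| ^ α) t)
    (V1 : ℝ → ℝ)
    (hV1 : V1 = fun t => (1 / 4) * ∑ i, ∑ j, A i j * (x t j - x t i) ^ 2) :
    (∀ t : ℝ, 0 < V1 t →
        deriv V1 t ≤ -((2 * μ ⟨1, by omega⟩) ^ ((1 + α) / 2)) * V1 t ^ ((1 + α) / 2)) ∧
      (∀ t : ℝ,
        (2 * V1 0) ^ ((1 - α) / 2) / ((1 - α) * μ ⟨1, by omega⟩ ^ ((1 + α) / 2)) ≤ t →
        V1 t = 0 ∧ ∀ i j : Fin n, x t i = x t j) := by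
  classical
  set l2 : ℝ := μ ⟨1, by omega⟩ with hl2
  set u : ℝ → Fin n → ℝ := fun t i => ∑ j, A i j * (x t j - x t i) with hu
  have hode' : ∀ (t : ℝ) (i : Fin n), HasDerivAt (fun s => x s i)
      (Real.sign (u t i) * |u t i| ^ α) t := hode
  have hsym' : ∀ i j, A j i = A i j := fun i j => hsymm.apply i j
  -- derivative of V1
  have hV1' : ∀ t : ℝ, HasDerivAt V1 (-∑ i, |u t i| ^ (1 + α)) t := by
    intro t
    have h0 : HasDerivAt (fun s => (1/4 : ℝ) * ∑ i, ∑ j, A i j * (x s j - x s i) ^ 2)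
        ((1/4 : ℝ) * ∑ i, ∑ j, A i j * (2 * (x t j - x t i) *
          (Real.sign (u t j) * |u t j| ^ α - Real.sign (u t i) * |u t i| ^ α))) t := by
      refine HasDerivAt.const_mul _ (HasDerivAt.fun_sum fun i _ => HasDerivAt.fun_sum fun j _ => ?_)
      have h := (((hode' t j).sub (hode' t i)).pow 2).const_mul (A i j)
      simpa [mul_comm, mul_assoc, mul_left_comm] using h
    rw [hV1]
    convert h0 using 1
    have hswap : ∑ i, ∑ j, A i j * (x t j - x t i) * (Real.sign (u t j) * |u t j| ^ α)
        = -∑ i, ∑ j, A i j * (x t j - x t i) * (Real.sign (u t i) * |u t i| ^ α) := by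
      rw [Finset.sum_comm, ← Finset.sum_neg_distrib]
      refine Finset.sum_congr rfl fun i _ => ?_
      rw [← Finset.sum_neg_distrib]
      refine Finset.sum_congr rfl fun j _ => ?_
      rw [hsym' i j]
      ring
    have hexp : ∀ i j, A i j * (2 * (x t j - x t i) *
          (Real.sign (u t j) * |u t j| ^ α - Real.sign (u t i) * |u t i| ^ α))
        = 2 * (A i j * (x t j - x t i) * (Real.sign (u t j) * |u t j| ^ α))
          - 2 * (A i j * (x t j - x t i) * (Real.sign (u t i) * |u t i| ^ α)) := by
      intro i j; ring
    simp only [hexp, Finset.sum_sub_distrib, ← Finset.mul_sum]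
    rw [hswap]
    have hcollect : ∑ i, ∑ j, A i j * (x t j - x t i) * (Real.sign (u t i) * |u t i| ^ α)
        = ∑ i, |u t i| ^ (1 + α) := by
      refine Finset.sum_congr rfl fun i _ => ?_
      rw [← Finset.sum_mul]
      have husum : (∑ j, A i j * (x t j - x t i)) = u t i := rfl
      rw [husum]
      rcases eq_or_ne (u t i) 0 with h | h
      · rw [h]; simp [Real.zero_rpow (by positivity : (1:ℝ) + α ≠ 0)]
      · have : u t i * (Real.sign (u t i) * |u t i| ^ α)
            = |u t i| ^ α * (Real.sign (u t i) * u t i) := by ring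
        rw [this, mySignMul]
        rw [← Real.rpow_one |u t i|, ← Real.rpow_mul (abs_nonneg _), ← Real.rpow_add (abs_pos.2 h)]
        norm_num
        ring_nf
    rw [hcollect]
    ring
  have hderiv : ∀ t, deriv V1 t = -∑ i, |u t i| ^ (1 + α) := fun t => (hV1' t).deriv
  -- quadratic form identity
  have hquad : ∀ t : ℝ, x t ⬝ᵥ (graphLaplacian A).mulVec (x t) = 2 * V1 t := by
    intro t
    have h1 : x t ⬝ᵥ (graphLaplacian A).mulVec (x t)
        = ∑ i, ∑ j, (A i j * (x t i)^2 - A i j * (x t i * x t j)) := by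
      simp only [dotProduct, lapMulVec]
      refine Finset.sum_congr rfl fun i _ => ?_
      rw [Finset.mul_sum]
      exact Finset.sum_congr rfl fun j _ => by ring
    have hswap2 : ∑ i, ∑ j, A i j * (x t j)^2 = ∑ i, ∑ j, A i j * (x t i)^2 := by
      rw [Finset.sum_comm]
      exact Finset.sum_congr rfl fun i _ => Finset.sum_congr rfl fun j _ => by rw [hsym' i j]
    have h2 : ∀ i j, A i j * (x t j - x t i)^2
        = A i j * (x t j)^2 + A i j * (x t i)^2 - 2 * (A i j * (x t i * x t j)) := by
      intro i j; ring
    rw [hV1, h1]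
    simp only [h2, Finset.sum_sub_distrib, Finset.sum_add_distrib, ← Finset.mul_sum]
    rw [hswap2]
    ring
  -- spectral bound
  have hspec : ∀ t : ℝ, 2 * l2 * V1 t ≤ ∑ i, (u t i)^2 := by
    intro t
    have hmv : ∀ i, (graphLaplacian A).mulVec (x t) i = -(u t i) := by
      intro i
      rw [lapMulVec, hu]
      rw [← Finset.sum_neg_distrib]
      exact Finset.sum_congr rfl fun j _ => by ring
    have h1 : ∑ i, (u t i)^2 = ∑ i, ((graphLaplacian A).mulVec (x t) i)^2 :=
      Finset.sum_congr rfl fun i _ => by rw [hmv, neg_sq]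
    rw [h1, quadFormSqEq A T μ (x t) hT hdiagz]
    have h2 : l2 * (x t ⬝ᵥ (graphLaplacian A).mulVec (x t)) ≤ ∑ i, (μ i)^2 * (T.mulVec (x t) i)^2 := by
      rw [quadFormEq A T μ (x t) hdiagz, Finset.mul_sum]
      refine Finset.sum_le_sum fun i _ => ?_
      have hμi : l2 * μ i ≤ (μ i)^2 := by
        rcases Nat.eq_zero_or_pos i.val with h0 | hpos
        · have : i = (⟨0, by omega⟩ : Fin n) := Fin.ext h0
          rw [this, hμ0]; simp
        · have hle : (⟨1, by omega⟩ : Fin n) ≤ i := by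
            simp only [Fin.le_def]; omega
          have h3 := hmono hle
          have h4 : (0:ℝ) ≤ μ i := le_trans hmu2.le h3
          nlinarith
      nlinarith [sq_nonneg (T.mulVec (x t) i)]
    calc 2 * l2 * V1 t = l2 * (x t ⬝ᵥ (graphLaplacian A).mulVec (x t)) := by rw [hquad t]; ring
      _ ≤ _ := h2
  have hp0 : (0:ℝ) < (1 + α) / 2 := by linarith
  have hp1 : (1 + α) / 2 ≤ 1 := by linarith
  have hV1nonneg : ∀ t, 0 ≤ V1 t := by
    intro t
    rw [hV1]
    have : (0:ℝ) ≤ ∑ i, ∑ j, A i j * (x t j - x t i)^2 :=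
      Finset.sum_nonneg fun i _ => Finset.sum_nonneg fun j _ =>
        mul_nonneg (hnonneg i j) (sq_nonneg _)
    linarith
  -- part 1
  have part1 : ∀ t : ℝ, 0 < V1 t →
      deriv V1 t ≤ -((2 * l2) ^ ((1 + α) / 2)) * V1 t ^ ((1 + α) / 2) := by
    intro t ht
    rw [hderiv, neg_mul, neg_le_neg_iff]
    have h1 : ((2 * l2) * V1 t) ^ ((1 + α) / 2) ≤ (∑ i, (u t i)^2) ^ ((1 + α) / 2) := by
      refine Real.rpow_le_rpow (by positivity) ?_ hp0.le
      have := hspec t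
      linarith
    have h2 : (∑ i, (u t i)^2) ^ ((1 + α) / 2) ≤ ∑ i, ((u t i)^2) ^ ((1 + α) / 2) :=
      mySumRpow _ _ (fun i => sq_nonneg _) hp0 hp1
    have h3 : ∀ i : Fin n, ((u t i)^2) ^ ((1 + α) / 2) = |u t i| ^ (1 + α) := by
      intro i
      rw [← sq_abs, ← Real.rpow_natCast |u t i| 2, ← Real.rpow_mul (abs_nonneg _)]
      norm_num
      congr 1
      ring
    rw [Real.mul_rpow (by positivity) ht.le] at h1
    calc (2 * l2) ^ ((1 + α) / 2) * V1 t ^ ((1 + α) / 2)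
        ≤ ∑ i, ((u t i)^2) ^ ((1 + α) / 2) := le_trans h1 h2
      _ = ∑ i, |u t i| ^ (1 + α) := Finset.sum_congr rfl fun i _ => h3 i
  refine ⟨part1, ?_⟩
  intro t ht
  have hdiffV : Differentiable ℝ V1 := fun s => (hV1' s).differentiableAt
  have hanti : Antitone V1 := by
    refine antitone_of_deriv_nonpos hdiffV fun s => ?_
    rw [hderiv]
    simp only [neg_nonpos]
    exact Finset.sum_nonneg fun i _ => Real.rpow_nonneg (abs_nonneg _) _
  have ht0 : (0:ℝ) ≤ t := by
    refine le_trans ?_ ht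
    apply div_nonneg (Real.rpow_nonneg (by linarith [hV1nonneg 0]) _)
    have : (0:ℝ) < l2 ^ ((1 + α) / 2) := Real.rpow_pos_of_pos hmu2 _
    nlinarith
  have hzero : V1 t = 0 := by
    by_contra hne
    have htpos : 0 < V1 t := (hV1nonneg t).lt_of_ne (Ne.symm hne)
    set β : ℝ := (1 - α) / 2 with hβ
    set c : ℝ := β * (2 * l2) ^ ((1 + α) / 2) with hc
    have hcpos : 0 < c := by
      apply mul_pos (by rw [hβ]; linarith)
      exact Real.rpow_pos_of_pos (by linarith) _
    have hV1s : ∀ s ∈ Set.Icc (0:ℝ) t, 0 < V1 s := fun s hs => lt_of_lt_of_le htpos (hanti hs.2)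
    -- g is antitone on [0, t]
    have hg : ∀ s ∈ Set.Icc (0:ℝ) t, HasDerivAt (fun r => V1 r ^ β + c * r)
        ((-∑ i, |u s i| ^ (1 + α)) * β * V1 s ^ (β - 1) + c) s := by
      intro s hs
      have h1 := (hV1' s).rpow_const (p := β) (Or.inl (hV1s s hs).ne')
      have h2 : HasDerivAt (fun r : ℝ => c * r) c s := by
        simpa using (hasDerivAt_id s).const_mul c
      exact h1.add h2
    have hganti : AntitoneOn (fun r => V1 r ^ β + c * r) (Set.Icc 0 t) := by
      refine antitoneOn_of_deriv_nonpos (convex_Icc 0 t) ?_ ?_ ?_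
      · exact fun s hs => ((hg s hs).continuousAt).continuousWithinAt
      · intro s hs
        rw [interior_Icc] at hs
        exact ((hg s (Set.Ioo_subset_Icc_self hs)).differentiableAt).differentiableWithinAt
      · intro s hs
        rw [interior_Icc] at hs
        have hsIcc := Set.Ioo_subset_Icc_self hs
        rw [(hg s hsIcc).deriv]
        have h4 := part1 s (hV1s s hsIcc)
        rw [hderiv] at h4
        have h5 : 0 ≤ β * V1 s ^ (β - 1) :=
          mul_nonneg (by rw [hβ]; linarith) (Real.rpow_nonneg (hV1s s hsIcc).le _)
        have h6 : (-∑ i, |u s i| ^ (1 + α)) * β * V1 s ^ (β - 1)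
            ≤ (-((2 * l2) ^ ((1 + α) / 2)) * V1 s ^ ((1 + α) / 2)) * β * V1 s ^ (β - 1) := by
          have := mul_le_mul_of_nonneg_left h4 h5
          nlinarith [this]
        have hmul : V1 s ^ (β - 1) * V1 s ^ ((1 + α) / 2) = 1 := by
          rw [← Real.rpow_add (hV1s s hsIcc)]
          have he : β - 1 + (1 + α) / 2 = 0 := by rw [hβ]; ring
          rw [he, Real.rpow_zero]
        have h7 : (-((2 * l2) ^ ((1 + α) / 2)) * V1 s ^ ((1 + α) / 2)) * β * V1 s ^ (β - 1) = -c := by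
          have : (-((2 * l2) ^ ((1 + α) / 2)) * V1 s ^ ((1 + α) / 2)) * β * V1 s ^ (β - 1)
              = -(β * (2 * l2) ^ ((1 + α) / 2)) * (V1 s ^ (β - 1) * V1 s ^ ((1 + α) / 2)) := by
            ring
          rw [this, hmul, mul_one, hc]
        linarith
    have hgt := hganti (Set.left_mem_Icc.mpr ht0) (Set.right_mem_Icc.mpr ht0) ht0
    simp only [mul_zero, add_zero] at hgt
    -- c * t ≥ V1 0 ^ β
    have h2e : (2:ℝ) ^ ((1 + α) / 2) * 2 ^ β = 2 := by
      rw [← Real.rpow_add (by norm_num : (0:ℝ) < 2)]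
      have : (1 + α) / 2 + β = 1 := by rw [hβ]; ring
      rw [this, Real.rpow_one]
    have hkey : c * ((2 * V1 0) ^ β) = (V1 0) ^ β * ((1 - α) * l2 ^ ((1 + α) / 2)) := by
      rw [hc, Real.mul_rpow (by norm_num : (0:ℝ) ≤ 2) (hV1nonneg 0),
          Real.mul_rpow (by norm_num : (0:ℝ) ≤ 2) hmu2.le]
      have h1α : (1:ℝ) - α = 2 * β := by rw [hβ]; ring
      rw [h1α]
      linear_combination (β * l2 ^ ((1 + α) / 2) * (V1 0) ^ β) * h2e
    have hD : 0 < (1 - α) * l2 ^ ((1 + α) / 2) :=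
      mul_pos (by linarith) (Real.rpow_pos_of_pos hmu2 _)
    have hN := (div_le_iff₀ hD).mp ht
    have h3 : (V1 0) ^ β * ((1 - α) * l2 ^ ((1 + α) / 2))
        ≤ (c * t) * ((1 - α) * l2 ^ ((1 + α) / 2)) := by
      nlinarith [mul_le_mul_of_nonneg_left hN hcpos.le]
    have h4 : (V1 0) ^ β ≤ c * t := le_of_mul_le_mul_right (by nlinarith) hD
    have h5 : 0 < V1 t ^ β := Real.rpow_pos_of_pos htpos _
    linarith
  refine ⟨hzero, ?_⟩
  have hsum0 : ∑ i, ∑ j, A i j * (x t j - x t i)^2 = 0 := by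
    have := hzero
    rw [hV1] at this
    linarith
  have hterm : ∀ i j, A i j * (x t j - x t i)^2 = 0 := by
    intro i j
    have h1 := (Finset.sum_eq_zero_iff_of_nonneg (fun i _ =>
      Finset.sum_nonneg fun j _ => mul_nonneg (hnonneg i j) (sq_nonneg _))).mp hsum0 i (mem_univ i)
    exact (Finset.sum_eq_zero_iff_of_nonneg (fun j _ =>
      mul_nonneg (hnonneg i j) (sq_nonneg _))).mp h1 j (mem_univ j)
  have hstep : ∀ a b : Fin n, 0 < A a b → x t a = x t b := by
    intro a b hab
    have h1 := hterm a b
    rcases mul_eq_zero.mp h1 with h | h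
    · exact absurd h hab.ne'
    · have := pow_eq_zero_iff (n := 2) (by norm_num) |>.mp h
      linarith [sub_eq_zero.mp this]
  have hchain : ∀ i j : Fin n, Relation.ReflTransGen (fun a b => 0 < A a b) i j → x t i = x t j := by
    intro i j h
    induction h with
    | refl => rfl
    | tail _ hcd ih => exact ih.trans (hstep _ _ hcd)
  exact fun i j => hchain i j (hconn i j)
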